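/- Let z, c ∈ ℝ^m with A^⊤c = 0, let T ∈ ℝ^{n×s} with T^⊤A^⊤z ≠ 0, let η ∈ (0,2), and set L̄ = ‖T^⊤A^⊤z‖²/‖AT T^⊤A^⊤z‖² and z⁺ = z − (2−η)·L̄·A T T^⊤ A^⊤ z. Then ‖z⁺ − c‖² = ‖z − c‖² − η(2−η)·L̄·‖T^⊤A^⊤z‖², and in particular ‖z⁺ − c‖² ≤ ‖z − c‖² − η(2−η)·‖T^⊤A^⊤z‖²/‖AT‖_2². -/

import Mathlib

open Matrix
open scoped Matrix.Norms.L2Operator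

private lemma mulVec_dot {m n : ℕ} (A : Matrix (Fin m) (Fin n) ℝ)
    (u : Fin n → ℝ) (v : Fin m → ℝ) :
    A.mulVec u ⬝ᵥ v = u ⬝ᵥ Aᵀ.mulVec v := by
  simp only [Matrix.mulVec, dotProduct, Matrix.transpose_apply, Finset.sum_mul,
    Finset.mul_sum]
  rw [Finset.sum_comm]
  congr 1; ext i; congr 1; ext j; ring

private lemma dot_expand {k : ℕ} (a q : Fin k → ℝ) (t : ℝ) :
    (a - t • q) ⬝ᵥ (a - t • q) = a ⬝ᵥ a - 2 * t * (q ⬝ᵥ a) + t ^ 2 * (q ⬝ᵥ q) := by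
  simp only [dotProduct_sub, sub_dotProduct, dotProduct_smul, smul_dotProduct,
    smul_eq_mul]
  rw [dotProduct_comm a q]
  ring

private lemma dot_eq_norm_sq {k : ℕ} (v : Fin k → ℝ) :
    v ⬝ᵥ v = ‖(EuclideanSpace.equiv (Fin k) ℝ).symm v‖ ^ 2 := by
  rw [EuclideanSpace.norm_eq, Real.sq_sqrt (by positivity)]
  simp [dotProduct, Real.norm_eq_abs, sq_abs, sq]

/-- One adaptive step of the `z`-update: exact error identity and the resulting
decrease bound in terms of the spectral norm `‖AT‖₂`. -/
theorem z_update_decrease {m n s : ℕ} (A : Matrix (Fin m) (Fin n) ℝ)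
    (z c : Fin m → ℝ) (hc : Aᵀ.mulVec c = 0)
    (T : Matrix (Fin n) (Fin s) ℝ)
    (η : ℝ) (hη : η ∈ Set.Ioo (0 : ℝ) 2)
    (w : Fin s → ℝ) (hwdef : w = Tᵀ.mulVec (Aᵀ.mulVec z)) (hw : w ≠ 0)
    (p : Fin m → ℝ) (hpdef : p = A.mulVec (T.mulVec w))
    (L : ℝ) (hL : L = (w ⬝ᵥ w) / (p ⬝ᵥ p))
    (z' : Fin m → ℝ) (hz' : z' = z - ((2 - η) * L) • p) :
    ((z' - c) ⬝ᵥ (z' - c) = (z - c) ⬝ᵥ (z - c) - η * (2 - η) * L * (w ⬝ᵥ w)) ∧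
    ((z' - c) ⬝ᵥ (z' - c) ≤ (z - c) ⬝ᵥ (z - c) - η * (2 - η) * (w ⬝ᵥ w) / ‖A * T‖ ^ 2) := by
  obtain ⟨hη0, hη2⟩ := hη
  -- key dot product identity
  have hpzc : p ⬝ᵥ (z - c) = w ⬝ᵥ w := by
    rw [hpdef, mulVec_dot, mulVec_dot]
    have : Aᵀ.mulVec (z - c) = Aᵀ.mulVec z := by
      rw [Matrix.mulVec_sub, hc, sub_zero]
    rw [this, ← hwdef]
  have hww_pos : 0 < w ⬝ᵥ w := by
    rw [dot_eq_norm_sq]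
    have hne : (EuclideanSpace.equiv (Fin s) ℝ).symm w ≠ 0 := by
      simpa using hw
    have := norm_pos_iff.mpr hne
    positivity
  have hp0 : p ≠ 0 := by
    intro h
    rw [h] at hpzc
    rw [zero_dotProduct] at hpzc
    exact hww_pos.ne' hpzc.symm
  have hpp_pos : 0 < p ⬝ᵥ p := by
    rw [dot_eq_norm_sq]
    have hne : (EuclideanSpace.equiv (Fin m) ℝ).symm p ≠ 0 := by
      simpa using hp0
    have := norm_pos_iff.mpr hne
    positivity
  have hLpp : L * (p ⬝ᵥ p) = w ⬝ᵥ w := by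
    rw [hL]; field_simp
  -- expansion
  have hexp : (z' - c) ⬝ᵥ (z' - c)
      = (z - c) ⬝ᵥ (z - c) - 2 * ((2 - η) * L) * (p ⬝ᵥ (z - c))
        + ((2 - η) * L) ^ 2 * (p ⬝ᵥ p) := by
    rw [hz']
    have : z - ((2 - η) * L) • p - c = (z - c) - ((2 - η) * L) • p := by
      abel
    rw [this, dot_expand]
  have hmain : (z' - c) ⬝ᵥ (z' - c)
      = (z - c) ⬝ᵥ (z - c) - η * (2 - η) * L * (w ⬝ᵥ w) := by
    rw [hexp, hpzc]
    have : ((2 - η) * L) ^ 2 * (p ⬝ᵥ p) = (2 - η) ^ 2 * L * (L * (p ⬝ᵥ p)) := by ring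
    rw [this, hLpp]
    ring
  refine ⟨hmain, ?_⟩
  rw [hmain]
  -- now show η(2-η) L (w⬝w) ≥ η(2-η)(w⬝w)/‖A*T‖²
  have hAT0 : (0:ℝ) < ‖A * T‖ := by
    rcases eq_or_lt_of_le (norm_nonneg (A * T)) with h | h
    · exfalso
      have : A * T = 0 := by rwa [eq_comm, norm_eq_zero] at h
      apply hp0
      rw [hpdef, Matrix.mulVec_mulVec, this, Matrix.zero_mulVec]
    · exact h
  have hbound : p ⬝ᵥ p ≤ ‖A * T‖ ^ 2 * (w ⬝ᵥ w) := by
    have h1 := Matrix.l2_opNorm_mulVec (A * T) ((EuclideanSpace.equiv (Fin s) ℝ).symm w)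
    have h2 : p ⬝ᵥ p = ‖(EuclideanSpace.equiv (Fin m) ℝ).symm ((A * T) *ᵥ w)‖ ^ 2 := by
      rw [← dot_eq_norm_sq, hpdef, Matrix.mulVec_mulVec]
    have h3 : w ⬝ᵥ w = ‖(EuclideanSpace.equiv (Fin s) ℝ).symm w‖ ^ 2 := dot_eq_norm_sq w
    rw [h2, h3, ← mul_pow]
    exact pow_le_pow_left₀ (norm_nonneg _) h1 2
  have hLlb : 1 / ‖A * T‖ ^ 2 ≤ L := by
    rw [hL, div_le_div_iff₀ (by positivity) hpp_pos, one_mul]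
    calc p ⬝ᵥ p ≤ ‖A * T‖ ^ 2 * (w ⬝ᵥ w) := hbound
      _ = (w ⬝ᵥ w) * ‖A * T‖ ^ 2 := by ring
  have hfac : 0 < η * (2 - η) * (w ⬝ᵥ w) := by
    have : 0 < 2 - η := by linarith
    positivity
  have : η * (2 - η) * (w ⬝ᵥ w) / ‖A * T‖ ^ 2 ≤ η * (2 - η) * L * (w ⬝ᵥ w) := by
    have := mul_le_mul_of_nonneg_left hLlb hfac.le
    calc η * (2 - η) * (w ⬝ᵥ w) / ‖A * T‖ ^ 2
        = η * (2 - η) * (w ⬝ᵥ w) * (1 / ‖A * T‖ ^ 2) := by ring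
      _ ≤ η * (2 - η) * (w ⬝ᵥ w) * L := this
      _ = η * (2 - η) * L * (w ⬝ᵥ w) := by ring
  linarith
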